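/- Let a > 0 and let f : ℝ → ℂ be a bounded continuous function. Then ∫_{−s}^{s} ( ∫_{{|x|>a}} |f(x+u)|² t(x,x+u)² π(x) dx )^{1/2} du ≤ β_a · ‖f‖_{L²(π)}, where β_a := ∫_{−s}^{s} sup_{|x|>a} √(t(x,x+u)·t(x+u,x)) du. -/

import Mathlib

open MeasureTheory Filter Topology

noncomputable section

/-- The probability measure on `ℝ` with density `π` w.r.t. Lebesgue measure. -/
def piMeas (π : ℝ → ℝ) : Measure ℝ := volume.withDensity fun x => ENNReal.ofReal (π x)

/-- `t(x,y) = min(q(x,y), π(y) q(y,x) / π(x))`. -/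
def mhT (π : ℝ → ℝ) (q : ℝ → ℝ → ℝ) (x y : ℝ) : ℝ := min (q x y) (π y * q y x / π x)

/-- The rejection probability `r(x) = 1 - ∫ t(x,y) dy`. -/
def mhR (π : ℝ → ℝ) (q : ℝ → ℝ → ℝ) (x : ℝ) : ℝ := 1 - ∫ y, mhT π q x y
theorem integral_le_beta_mul_norm
    (π : ℝ → ℝ) (hπpos : ∀ x, 0 < π x) (hπcont : Continuous π)
    (hπprob : ∫ x, π x = 1)
    (q : ℝ → ℝ → ℝ) (hqnn : ∀ x y, 0 ≤ q x y) (hqbdd : ∃ M, ∀ x y, q x y ≤ M)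
    (hqcont : Continuous fun p : ℝ × ℝ => q p.1 p.2) (hqprob : ∀ x, ∫ y, q x y = 1)
    (s : ℝ) (hs : 0 < s) (hrange : ∀ x u : ℝ, s < |u| → q x (x + u) = 0)
    (a : ℝ) (ha : 0 < a)
    (f : ℝ → ℂ) (hfcont : Continuous f) (hfbdd : ∃ M, ∀ x, ‖f x‖ ≤ M) :
    (∫ u in (-s)..s,
        Real.sqrt (∫ x in {x : ℝ | a < |x|},
          ‖f (x + u)‖ ^ 2 * (mhT π q x (x + u)) ^ 2 * π x))
      ≤ (∫ u in (-s)..s,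
          sSup ((fun x => Real.sqrt (mhT π q x (x + u) * mhT π q (x + u) x)) ''
            {x | a < |x|})) * Real.sqrt (∫ x, ‖f x‖ ^ 2 * π x) := by
  obtain ⟨M, hM⟩ := hqbdd
  obtain ⟨Mf, hMf⟩ := hfbdd
  have hM0 : 0 ≤ M := le_trans (hqnn 0 0) (hM 0 0)
  have hMf0 : 0 ≤ Mf := le_trans (norm_nonneg _) (hMf 0)
  have htnn : ∀ x y, 0 ≤ mhT π q x y := fun x y =>
    le_min (hqnn x y) (div_nonneg (mul_nonneg (hπpos y).le (hqnn y x)) (hπpos x).le)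
  have htle : ∀ x y, mhT π q x y ≤ M := fun x y => le_trans (min_le_left _ _) (hM x y)
  -- detailed balance
  have hdb : ∀ x y, mhT π q x y * π x = mhT π q y x * π y := by
    intro x y
    unfold mhT
    rw [min_mul_of_nonneg _ _ (hπpos x).le, min_mul_of_nonneg _ _ (hπpos y).le,
      div_mul_cancel₀ _ (hπpos x).ne', div_mul_cancel₀ _ (hπpos y).ne', min_comm]
    congr 1 <;> ring
  -- continuity of t
  have htc : Continuous fun p : ℝ × ℝ => mhT π q p.1 p.2 := by
    unfold mhT
    exact hqcont.min
      (((hπcont.comp continuous_snd).mul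
        (hqcont.comp (continuous_snd.prodMk continuous_fst))).div
        (hπcont.comp continuous_fst) fun p => (hπpos p.1).ne')
  have hπint : Integrable π := by
    by_contra h
    rw [integral_undef h] at hπprob
    exact one_ne_zero hπprob.symm
  set A : Set ℝ := {x : ℝ | a < |x|} with hA
  have hAmeas : MeasurableSet A := (isOpen_lt continuous_const continuous_abs).measurableSet
  have hx₀ : (a + 1 : ℝ) ∈ A := by
    simp only [hA, Set.mem_setOf_eq, abs_of_pos (by linarith : (0:ℝ) < a + 1)]
    linarith
  set S : ℝ → ℝ := fun u =>
    sSup ((fun x => Real.sqrt (mhT π q x (x + u) * mhT π q (x + u) x)) '' A) with hS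
  have hbdd : ∀ u, ∀ y ∈ (fun x => Real.sqrt (mhT π q x (x + u) * mhT π q (x + u) x)) '' A,
      y ≤ M := by
    rintro u y ⟨x, -, rfl⟩
    calc Real.sqrt (mhT π q x (x + u) * mhT π q (x + u) x)
        ≤ Real.sqrt (M * M) := Real.sqrt_le_sqrt
          (mul_le_mul (htle _ _) (htle _ _) (htnn _ _) hM0)
      _ = M := Real.sqrt_mul_self hM0
  have hBdd : ∀ u, BddAbove ((fun x => Real.sqrt (mhT π q x (x + u) * mhT π q (x + u) x)) '' A) :=
    fun u => ⟨M, fun y hy => hbdd u y hy⟩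
  have hS0 : ∀ u, 0 ≤ S u := fun u =>
    le_trans (Real.sqrt_nonneg _) (le_csSup (hBdd u) ⟨a + 1, hx₀, rfl⟩)
  have hSM : ∀ u, S u ≤ M := fun u => csSup_le ⟨_, ⟨a + 1, hx₀, rfl⟩⟩ (hbdd u)
  set I0 : ℝ := ∫ x, ‖f x‖ ^ 2 * π x with hI0def
  have hI0 : 0 ≤ I0 := integral_nonneg fun x => mul_nonneg (pow_nonneg (norm_nonneg _) 2) (hπpos x).le
  set C : ℝ := Real.sqrt I0 with hC
  have hC0 : 0 ≤ C := Real.sqrt_nonneg _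
  -- base integrability for fixed u
  have hint2 : ∀ u : ℝ, Integrable (fun x => ‖f (x + u)‖ ^ 2 * π (x + u)) := by
    intro u
    refine Integrable.mono' ((hπint.comp_add_right u).const_mul (Mf ^ 2))
      (Continuous.aestronglyMeasurable (by fun_prop)) (ae_of_all _ fun x => ?_)
    rw [Real.norm_of_nonneg (mul_nonneg (pow_nonneg (norm_nonneg _) 2) (hπpos _).le)]
    exact mul_le_mul_of_nonneg_right (pow_le_pow_left₀ (norm_nonneg _) (hMf _) 2) (hπpos _).le
  have htranslate : ∀ u : ℝ, (∫ x, ‖f (x + u)‖ ^ 2 * π (x + u)) = I0 := fun u =>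
    integral_add_right_eq_self (fun x => ‖f x‖ ^ 2 * π x) u
  -- key pointwise estimate
  have key : ∀ u : ℝ,
      Real.sqrt (∫ x in A, ‖f (x + u)‖ ^ 2 * (mhT π q x (x + u)) ^ 2 * π x) ≤ S u * C := by
    intro u
    have e1 : ∀ x : ℝ, ‖f (x + u)‖ ^ 2 * (mhT π q x (x + u)) ^ 2 * π x
        = ‖f (x + u)‖ ^ 2 * (mhT π q x (x + u) * mhT π q (x + u) x) * π (x + u) := by
      intro x
      linear_combination (‖f (x + u)‖ ^ 2 * mhT π q x (x + u)) * hdb x (x + u)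
    have hmidint : Integrable
        (fun x => ‖f (x + u)‖ ^ 2 * (mhT π q x (x + u) * mhT π q (x + u) x) * π (x + u)) := by
      refine Integrable.mono' ((hπint.comp_add_right u).const_mul (Mf ^ 2 * (M * M)))
        (Continuous.aestronglyMeasurable ?_) (ae_of_all _ fun x => ?_)
      · apply Continuous.mul _ (by fun_prop)
        apply Continuous.mul (by fun_prop)
        exact (htc.comp (continuous_id.prodMk (by fun_prop))).mul
          (htc.comp ((by fun_prop : Continuous fun x : ℝ => x + u).prodMk continuous_id))
      · rw [Real.norm_of_nonneg (mul_nonneg (mul_nonneg (pow_nonneg (norm_nonneg _) 2)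
          (mul_nonneg (htnn _ _) (htnn _ _))) (hπpos _).le)]
        refine mul_le_mul_of_nonneg_right ?_ (hπpos _).le
        refine mul_le_mul (pow_le_pow_left₀ (norm_nonneg _) (hMf _) 2) ?_
          (mul_nonneg (htnn _ _) (htnn _ _)) (pow_nonneg hMf0 2)
        exact mul_le_mul (htle _ _) (htle _ _) (htnn _ _) hM0
    have step2 : (∫ x in A, ‖f (x + u)‖ ^ 2 * (mhT π q x (x + u) * mhT π q (x + u) x) * π (x + u))
        ≤ ∫ x in A, (S u) ^ 2 * (‖f (x + u)‖ ^ 2 * π (x + u)) := by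
      refine setIntegral_mono_on hmidint.integrableOn
        (((hint2 u).const_mul ((S u) ^ 2)).integrableOn) hAmeas fun x hx => ?_
      have hts : mhT π q x (x + u) * mhT π q (x + u) x ≤ (S u) ^ 2 := by
        have h1 : Real.sqrt (mhT π q x (x + u) * mhT π q (x + u) x) ≤ S u :=
          le_csSup (hBdd u) ⟨x, hx, rfl⟩
        calc mhT π q x (x + u) * mhT π q (x + u) x
            = (Real.sqrt (mhT π q x (x + u) * mhT π q (x + u) x)) ^ 2 :=
              (Real.sq_sqrt (mul_nonneg (htnn _ _) (htnn _ _))).symm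
          _ ≤ (S u) ^ 2 := pow_le_pow_left₀ (Real.sqrt_nonneg _) h1 2
      calc ‖f (x + u)‖ ^ 2 * (mhT π q x (x + u) * mhT π q (x + u) x) * π (x + u)
          ≤ ‖f (x + u)‖ ^ 2 * (S u) ^ 2 * π (x + u) :=
            mul_le_mul_of_nonneg_right
              (mul_le_mul_of_nonneg_left hts (pow_nonneg (norm_nonneg _) 2)) (hπpos _).le
        _ = (S u) ^ 2 * (‖f (x + u)‖ ^ 2 * π (x + u)) := by ring
    have step3 : (∫ x in A, (S u) ^ 2 * (‖f (x + u)‖ ^ 2 * π (x + u)))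
        = (S u) ^ 2 * ∫ x in A, ‖f (x + u)‖ ^ 2 * π (x + u) := integral_const_mul _ _
    have step4 : (∫ x in A, ‖f (x + u)‖ ^ 2 * π (x + u)) ≤ I0 := by
      rw [← htranslate u]
      exact setIntegral_le_integral (hint2 u)
        (ae_of_all _ fun x => mul_nonneg (pow_nonneg (norm_nonneg _) 2) (hπpos _).le)
    have step5 : (∫ x in A, ‖f (x + u)‖ ^ 2 * (mhT π q x (x + u)) ^ 2 * π x) ≤ (S u * C) ^ 2 := by
      have : (S u * C) ^ 2 = (S u) ^ 2 * I0 := by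
        rw [mul_pow, hC, Real.sq_sqrt hI0]
      rw [this]
      calc (∫ x in A, ‖f (x + u)‖ ^ 2 * (mhT π q x (x + u)) ^ 2 * π x)
          = ∫ x in A, ‖f (x + u)‖ ^ 2 * (mhT π q x (x + u) * mhT π q (x + u) x) * π (x + u) := by
            simp only [e1]
        _ ≤ (S u) ^ 2 * ∫ x in A, ‖f (x + u)‖ ^ 2 * π (x + u) := step2.trans step3.le
        _ ≤ (S u) ^ 2 * I0 := mul_le_mul_of_nonneg_left step4 (pow_nonneg (hS0 u) 2)
    calc Real.sqrt (∫ x in A, ‖f (x + u)‖ ^ 2 * (mhT π q x (x + u)) ^ 2 * π x)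
        ≤ Real.sqrt ((S u * C) ^ 2) := Real.sqrt_le_sqrt step5
      _ = S u * C := Real.sqrt_sq (mul_nonneg (hS0 u) hC0)
  -- continuity of the LHS integrand in u
  have hGcont : Continuous fun u => ∫ x in A, ‖f (x + u)‖ ^ 2 * (mhT π q x (x + u)) ^ 2 * π x := by
    refine continuous_of_dominated (bound := fun x => Mf ^ 2 * M ^ 2 * π x) ?_ ?_ ?_ ?_
    · intro u
      refine Continuous.aestronglyMeasurable ?_
      apply Continuous.mul _ hπcont
      apply Continuous.mul (by fun_prop)
      exact ((htc.comp (continuous_id.prodMk (by fun_prop))).pow 2)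
    · intro u
      refine ae_of_all _ fun x => ?_
      rw [Real.norm_of_nonneg (mul_nonneg (mul_nonneg (pow_nonneg (norm_nonneg _) 2)
        (pow_nonneg (htnn _ _) 2)) (hπpos _).le)]
      refine mul_le_mul_of_nonneg_right ?_ (hπpos _).le
      exact mul_le_mul (pow_le_pow_left₀ (norm_nonneg _) (hMf _) 2)
        (pow_le_pow_left₀ (htnn _ _) (htle _ _) 2) (pow_nonneg (htnn _ _) 2) (pow_nonneg hMf0 2)
    · exact ((hπint.const_mul (Mf ^ 2 * M ^ 2)).integrableOn)
    · refine ae_of_all _ fun x => ?_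
      apply Continuous.mul _ continuous_const
      apply Continuous.mul (by fun_prop)
      exact (htc.comp (continuous_const.prodMk (by fun_prop))).pow 2
  have hgcont : Continuous fun u =>
      Real.sqrt (∫ x in A, ‖f (x + u)‖ ^ 2 * (mhT π q x (x + u)) ^ 2 * π x) :=
    Real.continuous_sqrt.comp hGcont
  -- measurability of S
  have hSlsc : LowerSemicontinuous S := by
    intro u y hy
    have hy' : y < sSup ((fun x => Real.sqrt (mhT π q x (x + u) * mhT π q (x + u) x)) '' A) := hy
    obtain ⟨z, hz, hyz⟩ := exists_lt_of_lt_csSup (Set.Nonempty.image _ ⟨a + 1, hx₀⟩) hy'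
    obtain ⟨x, hxA, rfl⟩ := hz
    have hc : Continuous fun v : ℝ => Real.sqrt (mhT π q x (x + v) * mhT π q (x + v) x) :=
      Real.continuous_sqrt.comp ((htc.comp (continuous_const.prodMk (by fun_prop))).mul
        (htc.comp ((by fun_prop : Continuous fun v : ℝ => x + v).prodMk continuous_const)))
    have hev : ∀ᶠ v in 𝓝 u, y < Real.sqrt (mhT π q x (x + v) * mhT π q (x + v) x) :=
      hc.continuousAt.eventually_mem (lt_mem_nhds hyz)
    filter_upwards [hev] with v hv
    exact hv.trans_le (le_csSup (hBdd v) ⟨x, hxA, rfl⟩)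
  have hSmeas : Measurable S := hSlsc.measurable
  -- interval integrability
  have hgint : IntervalIntegrable (fun u =>
      Real.sqrt (∫ x in A, ‖f (x + u)‖ ^ 2 * (mhT π q x (x + u)) ^ 2 * π x)) volume (-s) s :=
    hgcont.intervalIntegrable _ _
  have hSint : IntervalIntegrable S volume (-s) s := by
    rw [intervalIntegrable_iff]
    refine Integrable.mono' (((integrableOn_const_iff (C := M)).mpr (Or.inr
      (by rw [Set.uIoc_of_le (by linarith : -s ≤ s)]; exact measure_Ioc_lt_top)) :
        IntegrableOn (fun _ : ℝ => M) (Set.uIoc (-s) s) volume))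
      hSmeas.aestronglyMeasurable (ae_of_all _ fun u => ?_)
    rw [Real.norm_of_nonneg (hS0 u)]
    exact hSM u
  calc (∫ u in (-s)..s,
        Real.sqrt (∫ x in A, ‖f (x + u)‖ ^ 2 * (mhT π q x (x + u)) ^ 2 * π x))
      ≤ ∫ u in (-s)..s, S u * C := by
        refine intervalIntegral.integral_mono_on (by linarith) hgint (hSint.mul_const C)
          fun u _ => key u
    _ = (∫ u in (-s)..s, S u) * C := intervalIntegral.integral_mul_const C S
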